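/- arXiv:2006.05637 — 2 statements merged into one kernel-verified Lean document; each statement's English description precedes it below -/
import Mathlib

section
/- With A as above and ρ > 0, the matrix Λ = I_{2LM} + A Aᵀ/ρ satisfies Λ = (1/ρ)·(Λ₁ + Λ₂) ⊗ I_M, where Λ₁ = (ρ I_L + Re(QQ^H)) ⊗ [[1,0],[0,1]] and Λ₂ = Im(QQ^H) ⊗ [[0,-1],[1,0]]; consequently, if Λ₁ + Λ₂ is invertible, then Λ⁻¹ = ρ (Λ₁ + Λ₂)⁻¹ ⊗ I_M. -/
open Matrix Kronecker

private theorem sub_kron {α : Type*} [Ring α] {l m n p : Type*} (A B : Matrix l m α)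
    (C : Matrix n p α) : (A - B) ⊗ₖ C = A ⊗ₖ C - B ⊗ₖ C := by
  ext ⟨i, j⟩ ⟨k, r⟩; simp [sub_mul]

private theorem neg_kron {α : Type*} [Ring α] {l m n p : Type*} (A : Matrix l m α)
    (C : Matrix n p α) : (-A) ⊗ₖ C = -(A ⊗ₖ C) := by
  ext ⟨i, j⟩ ⟨k, r⟩; simp

private theorem kron_neg {α : Type*} [Ring α] {l m n p : Type*} (A : Matrix l m α)
    (C : Matrix n p α) : A ⊗ₖ (-C) = -(A ⊗ₖ C) := by
  ext ⟨i, j⟩ ⟨k, r⟩; simp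

private theorem kron_transpose {α : Type*} [CommRing α] {l m n p : Type*} (A : Matrix l m α)
    (B : Matrix n p α) : (A ⊗ₖ B)ᵀ = Aᵀ ⊗ₖ Bᵀ :=
  (kroneckerMap_transpose _ _ _).symm

private theorem hre_lemma {L N : ℕ} (Q : Matrix (Fin L) (Fin N) ℂ) :
    (Q * Qᴴ).map Complex.re =
      Q.map Complex.re * (Q.map Complex.re)ᵀ + Q.map Complex.im * (Q.map Complex.im)ᵀ := by
  ext i j
  simp only [map_apply, mul_apply, conjTranspose_apply, Matrix.add_apply, transpose_apply,
    Complex.re_sum]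
  rw [← Finset.sum_add_distrib]
  refine Finset.sum_congr rfl fun k _ => ?_
  simp [Complex.mul_re]

private theorem him_lemma {L N : ℕ} (Q : Matrix (Fin L) (Fin N) ℂ) :
    (Q * Qᴴ).map Complex.im =
      Q.map Complex.im * (Q.map Complex.re)ᵀ - Q.map Complex.re * (Q.map Complex.im)ᵀ := by
  ext i j
  simp only [map_apply, mul_apply, conjTranspose_apply, Matrix.sub_apply, transpose_apply,
    Complex.im_sum]
  rw [← Finset.sum_sub_distrib]
  refine Finset.sum_congr rfl fun k _ => ?_
  simp [Complex.mul_im]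
  ring

private theorem hJT : (!![0, -1; 1, 0] : Matrix (Fin 2) (Fin 2) ℝ)ᵀ = -!![0, -1; 1, 0] := by
  ext i j; fin_cases i <;> fin_cases j <;> simp

private theorem hJJ : (!![0, -1; 1, 0] : Matrix (Fin 2) (Fin 2) ℝ) * !![0, -1; 1, 0] = -1 := by
  ext i j; fin_cases i <;> fin_cases j <;>
    simp [Matrix.mul_apply, Fin.sum_univ_two, Matrix.one_apply]

private theorem key_lemma {L N : ℕ} (M : ℕ) (Q : Matrix (Fin L) (Fin N) ℂ) :
    ((Q.map Complex.re) ⊗ₖ ((1 : Matrix (Fin 2) (Fin 2) ℝ) ⊗ₖ (1 : Matrix (Fin M) (Fin M) ℝ)) +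
      (Q.map Complex.im) ⊗ₖ ((!![0, -1; 1, 0] : Matrix (Fin 2) (Fin 2) ℝ) ⊗ₖ
        (1 : Matrix (Fin M) (Fin M) ℝ))) *
    ((Q.map Complex.re) ⊗ₖ ((1 : Matrix (Fin 2) (Fin 2) ℝ) ⊗ₖ (1 : Matrix (Fin M) (Fin M) ℝ)) +
      (Q.map Complex.im) ⊗ₖ ((!![0, -1; 1, 0] : Matrix (Fin 2) (Fin 2) ℝ) ⊗ₖ
        (1 : Matrix (Fin M) (Fin M) ℝ)))ᵀ =
    ((Q * Qᴴ).map Complex.re) ⊗ₖ ((1 : Matrix (Fin 2) (Fin 2) ℝ) ⊗ₖ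
        (1 : Matrix (Fin M) (Fin M) ℝ)) +
      ((Q * Qᴴ).map Complex.im) ⊗ₖ ((!![0, -1; 1, 0] : Matrix (Fin 2) (Fin 2) ℝ) ⊗ₖ
        (1 : Matrix (Fin M) (Fin M) ℝ)) := by
  set J : Matrix (Fin 2) (Fin 2) ℝ := !![0, -1; 1, 0] with hJ
  set E : Matrix (Fin 2 × Fin M) (Fin 2 × Fin M) ℝ := J ⊗ₖ (1 : Matrix (Fin M) (Fin M) ℝ)
    with hE
  rw [one_kronecker_one]
  have hET : Eᵀ = -E := by rw [hE, kron_transpose, transpose_one, hJT, neg_kron]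
  have hEE : E * E = -1 := by
    rw [hE, ← mul_kronecker_mul, hJJ, one_mul, neg_kron, one_kronecker_one]
  rw [transpose_add, kron_transpose, kron_transpose, transpose_one, hET, kron_neg,
    Matrix.add_mul, Matrix.mul_add, Matrix.mul_add, Matrix.mul_neg, Matrix.mul_neg,
    ← mul_kronecker_mul, ← mul_kronecker_mul, ← mul_kronecker_mul, ← mul_kronecker_mul,
    Matrix.mul_one, Matrix.one_mul, Matrix.mul_one, hEE, kron_neg, neg_neg,
    hre_lemma, him_lemma, add_kronecker, sub_kron]
  abel


private theorem aux_eq {L N M : ℕ} (Q : Matrix (Fin L) (Fin N) ℂ) (ρ : ℝ) (hρ : 0 < ρ) :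
    (1 : Matrix (Fin L × (Fin 2 × Fin M)) (Fin L × (Fin 2 × Fin M)) ℝ) + ρ⁻¹ •
      (((Q.map Complex.re) ⊗ₖ ((1 : Matrix (Fin 2) (Fin 2) ℝ) ⊗ₖ (1 : Matrix (Fin M) (Fin M) ℝ)) +
        (Q.map Complex.im) ⊗ₖ ((!![0, -1; 1, 0] : Matrix (Fin 2) (Fin 2) ℝ) ⊗ₖ
          (1 : Matrix (Fin M) (Fin M) ℝ))) *
       ((Q.map Complex.re) ⊗ₖ ((1 : Matrix (Fin 2) (Fin 2) ℝ) ⊗ₖ (1 : Matrix (Fin M) (Fin M) ℝ)) +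
        (Q.map Complex.im) ⊗ₖ ((!![0, -1; 1, 0] : Matrix (Fin 2) (Fin 2) ℝ) ⊗ₖ
          (1 : Matrix (Fin M) (Fin M) ℝ)))ᵀ) =
    ρ⁻¹ • (Matrix.reindex (Equiv.prodAssoc (Fin L) (Fin 2) (Fin M))
      (Equiv.prodAssoc (Fin L) (Fin 2) (Fin M))
      (((ρ • (1 : Matrix (Fin L) (Fin L) ℝ) + (Q * Qᴴ).map Complex.re)
          ⊗ₖ (1 : Matrix (Fin 2) (Fin 2) ℝ) +
        ((Q * Qᴴ).map Complex.im) ⊗ₖ (!![0, -1; 1, 0] : Matrix (Fin 2) (Fin 2) ℝ))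
        ⊗ₖ (1 : Matrix (Fin M) (Fin M) ℝ))) := by
  rw [key_lemma M Q, add_kronecker, add_kronecker, add_kronecker]
  simp only [Matrix.reindex_apply, Matrix.submatrix_add, Matrix.submatrix_smul,
    smul_kronecker, Pi.add_apply, Pi.smul_apply, kronecker_assoc', one_kronecker_one, smul_add, smul_smul,
    inv_mul_cancel₀ hρ.ne', one_smul, add_assoc, Matrix.submatrix_one_equiv]

/-- With `A = Re(Q) ⊗ D₁ + Im(Q) ⊗ D₂`, the matrix `Λ = I + AAᵀ/ρ` factors as
`(1/ρ)·(Λ₁ + Λ₂) ⊗ I_M` (up to the canonical reindexing of the Kronecker product),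
and hence `Λ⁻¹ = ρ (Λ₁ + Λ₂)⁻¹ ⊗ I_M` whenever `Λ₁ + Λ₂` is invertible. -/
theorem Lambda_kronecker_factorization {L N M : ℕ} (Q : Matrix (Fin L) (Fin N) ℂ)
    (ρ : ℝ) (hρ : 0 < ρ) :
    let D1 : Matrix (Fin 2 × Fin M) (Fin 2 × Fin M) ℝ :=
      (1 : Matrix (Fin 2) (Fin 2) ℝ) ⊗ₖ (1 : Matrix (Fin M) (Fin M) ℝ)
    let D2 : Matrix (Fin 2 × Fin M) (Fin 2 × Fin M) ℝ :=
      (!![0, -1; 1, 0] : Matrix (Fin 2) (Fin 2) ℝ) ⊗ₖ (1 : Matrix (Fin M) (Fin M) ℝ)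
    let A : Matrix (Fin L × (Fin 2 × Fin M)) (Fin N × (Fin 2 × Fin M)) ℝ :=
      (Q.map Complex.re) ⊗ₖ D1 + (Q.map Complex.im) ⊗ₖ D2
    let Λ : Matrix (Fin L × (Fin 2 × Fin M)) (Fin L × (Fin 2 × Fin M)) ℝ :=
      1 + ρ⁻¹ • (A * Aᵀ)
    let Λ₁ : Matrix (Fin L × Fin 2) (Fin L × Fin 2) ℝ :=
      (ρ • (1 : Matrix (Fin L) (Fin L) ℝ) + (Q * Qᴴ).map Complex.re)
        ⊗ₖ (1 : Matrix (Fin 2) (Fin 2) ℝ)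
    let Λ₂ : Matrix (Fin L × Fin 2) (Fin L × Fin 2) ℝ :=
      ((Q * Qᴴ).map Complex.im) ⊗ₖ (!![0, -1; 1, 0] : Matrix (Fin 2) (Fin 2) ℝ)
    let e := Equiv.prodAssoc (Fin L) (Fin 2) (Fin M)
    Λ = ρ⁻¹ • (Matrix.reindex e e ((Λ₁ + Λ₂) ⊗ₖ (1 : Matrix (Fin M) (Fin M) ℝ))) ∧
    (IsUnit (Λ₁ + Λ₂) →
      Λ⁻¹ = ρ • (Matrix.reindex e e ((Λ₁ + Λ₂)⁻¹ ⊗ₖ (1 : Matrix (Fin M) (Fin M) ℝ)))) := by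
  intro D1 D2 A Λ Λ₁ Λ₂ e
  have h1 : Λ = ρ⁻¹ • (Matrix.reindex e e ((Λ₁ + Λ₂) ⊗ₖ (1 : Matrix (Fin M) (Fin M) ℝ))) :=
    aux_eq Q ρ hρ
  refine ⟨h1, fun hU => ?_⟩
  have hdet : IsUnit (Λ₁ + Λ₂).det := (Matrix.isUnit_iff_isUnit_det _).mp hU
  apply Matrix.inv_eq_right_inv
  rw [h1, Matrix.reindex_apply, Matrix.reindex_apply, smul_mul_assoc, Matrix.mul_smul,
    Matrix.submatrix_mul_equiv, ← mul_kronecker_mul, Matrix.mul_nonsing_inv _ hdet,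
    Matrix.one_mul, one_kronecker_one, smul_smul, inv_mul_cancel₀ hρ.ne', one_smul,
    Matrix.submatrix_one_equiv]
end

section
/- Consider the consensus QP from ALADIN specialized to group Lasso: minimize (1/2)‖z₀ − ξ₀‖² + g₀ᵀz₀ + Σᵢ [(ρ/2)‖zᵢ − ξᵢ‖² + gᵢᵀzᵢ] subject to z₀ = Σᵢ Aᵢzᵢ, where g₀ = z₀ᵏ − ξ₀ + λᵏ and gᵢ = ρ(zᵢᵏ − ξᵢ) + Aᵢᵀλᵏ, and suppose ξ₀ = (z₀ᵏ + b − λᵏ)/2 and the previous feasibility z₀ᵏ = Σᵢ Aᵢzᵢᵏ holds. Then the multiplier increment Δλ = λ^{k+1} − λᵏ satisfies (I + AAᵀ/ρ)Δλ = 2 Σᵢ Aᵢ(zᵢᵏ − ξᵢ), i.e., Δλ = 2(I + AAᵀ/ρ)⁻¹ Σᵢ Aᵢ(zᵢᵏ − ξᵢ). -/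
open Matrix

lemma sum_mulVec_aux {ι m k : ℕ} (M : Fin ι → Matrix (Fin m) (Fin k) ℝ)
    (v : Fin k → ℝ) : (∑ i, M i).mulVec v = ∑ i, (M i).mulVec v := by
  ext j
  simp only [Matrix.mulVec, dotProduct, Finset.sum_apply, Matrix.sum_apply,
    Finset.sum_mul]
  rw [Finset.sum_comm]

/-- In the consensus QP of ALADIN specialized to group Lasso, the KKT conditions
yield the multiplier increment equation `(I + AAᵀ/ρ)Δλ = 2 Σᵢ Aᵢ(zᵢᵏ − ξᵢ)`,
i.e. `Δλ = 2(I + AAᵀ/ρ)⁻¹ Σᵢ Aᵢ(zᵢᵏ − ξᵢ)`. -/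
theorem aladin_consensus_step {N m : ℕ} (n : Fin N → ℕ)
    (A : ∀ i : Fin N, Matrix (Fin m) (Fin (n i)) ℝ) (ρ : ℝ) (hρ : 0 < ρ)
    (b lamk lam' z0k z0' ξ0 : Fin m → ℝ)
    (zk z' ξ : ∀ i : Fin N, Fin (n i) → ℝ)
    -- the previous primal/dual iterate satisfies the previous KKT conditions:
    (hz0k : z0k = b - lamk)
    (hfeask : z0k = ∑ i, (A i).mulVec (zk i))
    -- the parallel step for the 0-th agent:
    (hξ0 : ξ0 = (1 / 2) • (z0k + b - lamk))
    -- the KKT conditions of the consensus QP: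
    (hKKT0 : z0' = b - lam')
    (hKKTi : ∀ i, z' i = 2 • ξ i - zk i + ρ⁻¹ • (A i)ᵀ.mulVec (lam' - lamk))
    (hKKTc : z0' = ∑ i, (A i).mulVec (z' i)) :
    let Λ : Matrix (Fin m) (Fin m) ℝ := 1 + ρ⁻¹ • ∑ i, A i * (A i)ᵀ
    Λ.mulVec (lam' - lamk) = 2 • ∑ i, (A i).mulVec (zk i - ξ i) ∧
    lam' - lamk = Λ⁻¹.mulVec (2 • ∑ i, (A i).mulVec (zk i - ξ i)) := by
  intro Λ
  set Δ : Fin m → ℝ := lam' - lamk with hΔ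
  set S : Matrix (Fin m) (Fin m) ℝ := ∑ i, A i * (A i)ᵀ with hS
  -- expand the consensus condition
  have h2 : ∀ i, (A i).mulVec (z' i)
      = ((A i).mulVec (ξ i) + (A i).mulVec (ξ i)) - (A i).mulVec (zk i)
        + ρ⁻¹ • (A i * (A i)ᵀ).mulVec Δ := by
    intro i
    rw [hKKTi i, mulVec_add, mulVec_sub, mulVec_smul, mulVec_smul, mulVec_mulVec,
      two_smul]
  have hcons : b - lam'
      = ((∑ i, (A i).mulVec (ξ i)) + (∑ i, (A i).mulVec (ξ i))) - z0k
        + ρ⁻¹ • S.mulVec Δ := by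
    rw [← hKKT0, hKKTc, hfeask]
    simp only [h2]
    rw [Finset.sum_add_distrib, Finset.sum_sub_distrib, Finset.sum_add_distrib,
      ← Finset.smul_sum, hS, sum_mulVec_aux]
  -- the key linear identity
  have hmain : Λ.mulVec Δ = 2 • ∑ i, (A i).mulVec (zk i - ξ i) := by
    have hΛ : Λ.mulVec Δ = Δ + ρ⁻¹ • S.mulVec Δ := by
      rw [add_mulVec, one_mulVec, smul_mulVec]
    have hrhs : (2 : ℕ) • ∑ i, (A i).mulVec (zk i - ξ i)
        = (z0k + z0k) - ((∑ i, (A i).mulVec (ξ i)) + (∑ i, (A i).mulVec (ξ i))) := by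
      rw [two_smul]
      simp only [mulVec_sub, Finset.sum_sub_distrib, ← hfeask]
      abel
    rw [hΛ, hrhs]
    have hd : ρ⁻¹ • S.mulVec Δ
        = (b - lam') - (((∑ i, (A i).mulVec (ξ i)) + (∑ i, (A i).mulVec (ξ i))) - z0k) := by
      rw [hcons]; abel
    rw [hd, hΔ, hz0k]
    abel
  refine ⟨hmain, ?_⟩
  -- invertibility of Λ
  have hps : ∀ i : Fin N, (A i * (A i)ᵀ).PosSemidef := by
    intro i
    have := Matrix.posSemidef_self_mul_conjTranspose (A i)
    simpa using this
  have hSps : S.PosSemidef := by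
    rw [hS]
    exact Finset.sum_induction _ _ (fun a b ha hb => ha.add hb)
      Matrix.PosSemidef.zero (fun i _ => hps i)
  have hsm : (ρ⁻¹ • S).PosSemidef := by
    refine ⟨?_, fun x => ?_⟩
    · have h := hSps.1
      unfold Matrix.IsHermitian at h ⊢
      rw [Matrix.conjTranspose_smul, h]
      simp
    · exact (hSps.smul (inv_nonneg.2 hρ.le)).2 x
  have hΛpd : Λ.PosDef := Matrix.PosDef.one.add_posSemidef hsm
  have hunit : IsUnit Λ.det := isUnit_iff_ne_zero.mpr hΛpd.det_pos.ne'
  rw [← hmain, mulVec_mulVec, Matrix.nonsing_inv_mul Λ hunit, one_mulVec]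
end
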